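/- Let C be a k-dimensional linear code over a finite field F_q with q elements, and suppose C is a constant weight code of weight d (every nonzero codeword has weight d). Then the weight hierarchy of C is given by q^{i−1}(q−1) · d_i = d · (q^i − 1) for every 1 ≤ i ≤ k, i.e. d_i = d (q^i − 1)/(q^{i−1}(q−1)). -/

import Mathlib

/-- The support of a subcode `D` of `F_q^n`. -/
def codeSupp {F : Type*} [Field F] {n : ℕ} (D : Submodule F (Fin n → F)) : Set (Fin n) :=
  {x | ∃ d ∈ D, d x ≠ 0}

/-- The weight of a subcode: the cardinality of its support. -/
noncomputable def codeWt {F : Type*} [Field F] {n : ℕ} (D : Submodule F (Fin n → F)) : ℕ :=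
  (codeSupp D).ncard

/-- The `i`-th generalized Hamming weight of a code `C`:
the minimal weight of an `i`-dimensional subcode of `C`. -/
noncomputable def dGHW {F : Type*} [Field F] {n : ℕ} (C : Submodule F (Fin n → F)) (i : ℕ) : ℕ :=
  sInf {m | ∃ D : Submodule F (Fin n → F), D ≤ C ∧ Module.finrank F D = i ∧ codeWt D = m}

open Finset

/-- Counting lemma: every `i`-dimensional subcode of a constant weight-`d` code
has the same weight. -/
lemma counting_aux {F : Type*} [Field F] [Fintype F] {n d : ℕ}
    (D : Submodule F (Fin n → F)) {i : ℕ} (hi : 1 ≤ i)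
    (hD : Module.finrank F D = i)
    (hconst : ∀ c ∈ D, c ≠ 0 → ({x | c x ≠ 0} : Set (Fin n)).ncard = d) :
    Fintype.card F ^ (i - 1) * (Fintype.card F - 1) * codeWt D
      = d * (Fintype.card F ^ i - 1) := by
  classical
  set q := Fintype.card F with hq
  have hq2 : 2 ≤ q := Fintype.one_lt_card
  -- cardinality of D
  have hcardD : Nat.card D = q ^ i := by
    rw [Nat.card_eq_fintype_card, Module.card_eq_pow_finrank (K := F) (V := D), hD]
  -- the finset of codewords of D
  set T : Finset (Fin n → F) := Set.Finite.toFinset (Set.toFinite (D : Set (Fin n → F))) with hT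
  have hmemT : ∀ c, c ∈ T ↔ c ∈ D := by
    intro c
    rw [hT, Set.Finite.mem_toFinset, SetLike.mem_coe]
  have hTcard : T.card = q ^ i := by
    rw [← hcardD]
    rw [Nat.card_eq_fintype_card]
    rw [hT, Set.Finite.card_toFinset]
    simp [Set.toFinset_card]
  clear_value q T
  -- weight of a codeword as a finset card
  have hwt : ∀ c : Fin n → F, ({x | c x ≠ 0} : Set (Fin n)).ncard
      = (univ.filter fun x => c x ≠ 0).card := by
    intro c
    rw [Set.ncard_eq_toFinset_card']
    congr 1
    ext x
    simp
  -- double counting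
  have hswap : ∑ c ∈ T, (univ.filter fun x => c x ≠ 0).card
      = ∑ x : Fin n, (T.filter fun c => c x ≠ 0).card := by
    simp only [card_filter]
    exact Finset.sum_comm
  -- LHS of double counting
  have hzeroT : (0 : Fin n → F) ∈ T := (hmemT 0).2 (Submodule.zero_mem D)
  have hLHS : ∑ c ∈ T, (univ.filter fun x => c x ≠ 0).card = (q ^ i - 1) * d := by
    rw [← Finset.add_sum_erase _ _ hzeroT]
    have h0 : (univ.filter fun x => (0 : Fin n → F) x ≠ 0).card = 0 := by
      simp
    rw [h0, zero_add]
    rw [Finset.sum_congr rfl (fun c hc => ?_), Finset.sum_const, smul_eq_mul]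
    · rw [Finset.card_erase_of_mem hzeroT, hTcard]
    · rw [← hwt c, hconst c ((hmemT c).1 (Finset.mem_of_mem_erase hc))
        (Finset.ne_of_mem_erase hc)]
  -- RHS of double counting: each coordinate in the support contributes q^i - q^(i-1)
  have hRHS : ∀ x : Fin n, (T.filter fun c => c x ≠ 0).card
      = if x ∈ codeSupp D then q ^ i - q ^ (i - 1) else 0 := by
    intro x
    by_cases hx : x ∈ codeSupp D
    · simp only [hx, if_true]
      -- evaluation map
      set f : D →ₗ[F] F := (LinearMap.proj x).comp D.subtype with hf
      have hfapp : ∀ c : D, f c = (c : Fin n → F) x := fun c => rfl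
      obtain ⟨c0, hc0D, hc0x⟩ := hx
      have hsurj : Function.Surjective f := by
        intro a
        refine ⟨(a * (c0 x)⁻¹) • ⟨c0, hc0D⟩, ?_⟩
        show ((a * (c0 x)⁻¹) • c0) x = a
        simp [mul_assoc, inv_mul_cancel₀ hc0x]
      have hrank : Module.finrank F (LinearMap.ker f) = i - 1 := by
        have h1 := LinearMap.finrank_range_add_finrank_ker f
        rw [hD] at h1
        rw [LinearMap.range_eq_top.2 hsurj, finrank_top, Module.finrank_self] at h1
        clear * - h1 hi
        omega
      have hkercard : Nat.card (LinearMap.ker f) = q ^ (i - 1) := by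
        rw [Nat.card_eq_fintype_card, Module.card_eq_pow_finrank (K := F), hrank, ← hq]
      -- the codewords vanishing at x
      have hker : (T.filter fun c => c x = 0).card = q ^ (i - 1) := by
        rw [← hkercard]
        rw [Nat.card_eq_fintype_card, ← Fintype.card_coe]
        apply Fintype.card_congr
        refine ⟨fun c => ⟨⟨c.1, (hmemT c.1).1 (Finset.mem_of_mem_filter _ c.2)⟩, ?_⟩,
          fun c => ⟨(c.1 : Fin n → F), ?_⟩, ?_, ?_⟩
        · have := (Finset.mem_filter.1 c.2).2
          rw [LinearMap.mem_ker, hfapp]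
          exact this
        · refine Finset.mem_filter.2 ⟨(hmemT _).2 c.1.2, ?_⟩
          have := c.2
          rw [LinearMap.mem_ker, hfapp] at this
          exact this
        · intro c; rfl
        · intro c; rfl
      have hadd := Finset.card_filter_add_card_filter_not
        (s := T) (p := fun c => c x = 0)
      simp only [ne_eq]
      have hsplit : #(filter (fun c => ¬ c x = 0) T) = #T - #(filter (fun c => c x = 0) T) :=
        Nat.eq_sub_of_add_eq (by rw [Nat.add_comm]; exact hadd)
      rw [hsplit, hker, hTcard]
    · simp only [hx, if_false]
      rw [Finset.card_eq_zero, Finset.filter_eq_empty_iff]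
      intro c hc
      simp only [not_not]
      by_contra h
      exact hx ⟨c, (hmemT c).1 hc, h⟩
  have hRHS' : ∑ x : Fin n, (T.filter fun c => c x ≠ 0).card
      = codeWt D * (q ^ i - q ^ (i - 1)) := by
    rw [Finset.sum_congr rfl (fun x _ => hRHS x)]
    rw [Finset.sum_ite, Finset.sum_const, Finset.sum_const_zero, add_zero, smul_eq_mul]
    congr 1
    rw [codeWt, Set.ncard_eq_toFinset_card']
    congr 1
    ext x
    simp
  -- put things together
  have hkey : (q ^ i - 1) * d = codeWt D * (q ^ i - q ^ (i - 1)) := by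
    rw [← hLHS, hswap, hRHS']
  have hpow : q ^ i = q ^ (i - 1) * q := by
    rw [← pow_succ]
    congr 1
    clear * - hi
    omega
  have hsub : q ^ (i - 1) * (q - 1) = q ^ i - q ^ (i - 1) := by
    have h1 : q ^ i = q ^ (i - 1) * (q - 1) + q ^ (i - 1) := by
      rw [hpow, ← Nat.mul_succ]
      congr 1
      clear * - hi hq2
      omega
    clear * - h1
    omega
  rw [hsub, mul_comm, ← hkey]
  exact Nat.mul_comm _ _

theorem weight_hierarchy_of_constant_weight
    {F : Type*} [Field F] [Fintype F] {n k q d : ℕ} (hq : Fintype.card F = q)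
    (C : Submodule F (Fin n → F)) (hk : Module.finrank F C = k)
    (hconst : ∀ c ∈ C, c ≠ 0 → ({x | c x ≠ 0} : Set (Fin n)).ncard = d) :
    ∀ i, 1 ≤ i → i ≤ k →
      q ^ (i - 1) * (q - 1) * dGHW C i = d * (q ^ i - 1) := by
  intro i hi hik
  classical
  subst hq
  -- the set over which the infimum is taken
  set S := {m | ∃ D : Submodule F (Fin n → F), D ≤ C ∧ Module.finrank F D = i ∧ codeWt D = m}
    with hS
  -- existence of an i-dimensional subcode
  have hnonempty : S.Nonempty := by
    have : FiniteDimensional F C := inferInstance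
    let b : Module.Basis (Fin k) F C := by
      rw [← hk]; exact Module.finBasis F C
    let v : Fin i → C := b ∘ Fin.castLE hik
    have hli : LinearIndependent F v :=
      b.linearIndependent.comp _ (Fin.castLE_injective hik)
    let D0 : Submodule F C := Submodule.span F (Set.range v)
    have hD0 : Module.finrank F D0 = i := by
      rw [finrank_span_eq_card hli, Fintype.card_fin]
    refine ⟨codeWt (D0.map C.subtype), D0.map C.subtype, ?_, ?_, rfl⟩
    · rw [Submodule.map_le_iff_le_comap]
      intro y _
      simp
    · rw [Submodule.finrank_map_subtype_eq, hD0]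
  -- the infimum is a member
  obtain ⟨D, hDC, hDrank, hDwt⟩ := Nat.sInf_mem hnonempty
  have := counting_aux D hi hDrank (fun c hc => hconst c (hDC hc))
  rw [hDwt] at this
  exact this
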